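/- Let μ be a compactly supported complex Borel measure on ℂ with μ(ℂ) ≠ 0. If for all nonnegative integers m, n one has μ(ℂ) · ∫ zⁿ · conj(z)ᵐ dμ(z) = (∫ zⁿ dμ(z)) · (∫ conj(z)ᵐ dμ(z)), then μ = c·δ_ζ for some nonzero constant c ∈ ℂ and some point ζ ∈ ℂ, where δ_ζ is the Dirac measure at ζ. -/

import Mathlib

open MeasureTheory Complex Metric Set
open scoped Classical

private lemma exp_tsum' (x : ℂ) : Complex.exp x = ∑' n : ℕ, x ^ n / n.factorial := by
  rw [Complex.exp_eq_exp_ℂ, NormedSpace.exp_eq_tsum_div]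

section Aux

variable {P : Measure ℂ} [IsFiniteMeasure P] {K : Set ℂ}

private lemma aux_mem_ae (hK : IsCompact K) (hK0 : P Kᶜ = 0) : ∀ᵐ z ∂P, z ∈ K := by
  rw [ae_iff]
  simpa [Set.compl_def] using hK0

private lemma aux_int (hK : IsCompact K) (hK0 : P Kᶜ = 0) {g : ℂ → ℂ} (hg : Measurable g)
    {C : ℝ} (hC : ∀ z ∈ K, ‖g z‖ ≤ C) : Integrable g P :=
  ⟨hg.aestronglyMeasurable,
    HasFiniteIntegral.of_bounded (C := C) ((aux_mem_ae hK hK0).mono fun z hz => hC z hz)⟩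

private lemma expRe_le {x w : ℂ} {R : ℝ} (hw : ‖w‖ ≤ R) :
    ‖Complex.exp (x * w)‖ ≤ Real.exp (‖x‖ * R) := by
  rw [Complex.norm_exp]
  apply Real.exp_le_exp.2
  calc (x * w).re ≤ ‖x * w‖ := Complex.re_le_norm _
    _ = ‖x‖ * ‖w‖ := norm_mul _ _
    _ ≤ ‖x‖ * R := by
        exact mul_le_mul_of_nonneg_left hw (norm_nonneg _)

private lemma aux_series (hK : IsCompact K) (hK0 : P Kᶜ = 0) {w g : ℂ → ℂ} (hw : Measurable w)
    (hg : Measurable g) {R C : ℝ} (hR0 : 0 ≤ R) (hR : ∀ z ∈ K, ‖w z‖ ≤ R)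
    (hC : ∀ z ∈ K, ‖g z‖ ≤ C) (a : ℂ) :
    ∫ z, Complex.exp (a * w z) * g z ∂P
      = ∑' n : ℕ, a ^ n / n.factorial * ∫ z, w z ^ n * g z ∂P := by
  have hae := aux_mem_ae hK hK0
  set F : ℕ → ℂ → ℂ := fun n z => (a * w z) ^ n / n.factorial * g z with hF
  have hFbound : ∀ n, ∀ z ∈ K, ‖F n z‖ ≤ (‖a‖ * R) ^ n / n.factorial * C := by
    intro n z hz
    have h1 : ‖(a * w z) ^ n / (n.factorial : ℂ)‖ ≤ (‖a‖ * R) ^ n / n.factorial := by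
      rw [norm_div, norm_pow, norm_mul]
      have hnf : ‖((n.factorial : ℕ) : ℂ)‖ = (n.factorial : ℝ) := by
        simp
      rw [hnf]
      gcongr
      exact hR z hz
    calc ‖F n z‖ = ‖(a * w z) ^ n / (n.factorial : ℂ)‖ * ‖g z‖ := norm_mul _ _
      _ ≤ (‖a‖ * R) ^ n / n.factorial * C :=
          mul_le_mul h1 (hC z hz) (norm_nonneg _) (by positivity)
  have hFint : ∀ n, Integrable (F n) P := fun n =>
    aux_int hK hK0 (by fun_prop) (hFbound n)
  have hFsum : Summable fun n => ∫ z, ‖F n z‖ ∂P := by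
    apply Summable.of_nonneg_of_le (fun n => integral_nonneg fun z => norm_nonneg _)
      (fun n => ?_) (((Real.summable_pow_div_factorial (‖a‖ * R)).mul_right
        (C * (P Set.univ).toReal)))
    calc ∫ z, ‖F n z‖ ∂P ≤ ∫ _z, (‖a‖ * R) ^ n / n.factorial * C ∂P := by
          apply integral_mono_ae (hFint n).norm (integrable_const _)
          exact hae.mono fun z hz => hFbound n z hz
      _ = (P Set.univ).toReal • ((‖a‖ * R) ^ n / n.factorial * C) := integral_const _
      _ = (‖a‖ * R) ^ n / n.factorial * (C * (P Set.univ).toReal) := by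
          rw [smul_eq_mul]; ring
  have key := integral_tsum_of_summable_integral_norm hFint hFsum
  have hpt : ∀ z, ∑' n, F n z = Complex.exp (a * w z) * g z := by
    intro z
    rw [exp_tsum' (a * w z), tsum_mul_right]
  calc ∫ z, Complex.exp (a * w z) * g z ∂P = ∫ z, ∑' n, F n z ∂P :=
        integral_congr_ae (Filter.Eventually.of_forall fun z => (hpt z).symm)
    _ = ∑' n, ∫ z, F n z ∂P := key.symm
    _ = ∑' n : ℕ, a ^ n / n.factorial * ∫ z, w z ^ n * g z ∂P := by
        refine tsum_congr fun n => ?_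
        rw [← integral_const_mul]
        refine integral_congr_ae (Filter.Eventually.of_forall fun z => ?_)
        show (a * w z) ^ n / n.factorial * g z = _
        rw [mul_pow]
        ring

end Aux

section Aux2

variable {P : Measure ℂ} [IsFiniteMeasure P] {K : Set ℂ}

/-- The transform `a ↦ ∫ exp(a z) g(z) dP`. -/
noncomputable def Phi (P : Measure ℂ) (g : ℂ → ℂ) (a : ℂ) : ℂ :=
  ∫ z, Complex.exp (a * z) * g z ∂P

private lemma aux_deriv (hK : IsCompact K) (hK0 : P Kᶜ = 0) {g : ℂ → ℂ} (hg : Measurable g)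
    {C R : ℝ} (hC : ∀ z ∈ K, ‖g z‖ ≤ C) (hR0 : 0 ≤ R) (hR : ∀ z ∈ K, ‖z‖ ≤ R) (a : ℂ) :
    HasDerivAt (Phi P g) (Phi P (fun z => z * g z) a) a := by
  have hae := aux_mem_ae hK hK0
  have hmain := (hasDerivAt_integral_of_dominated_loc_of_deriv_le (μ := P)
      (F := fun (x : ℂ) (z : ℂ) => Complex.exp (x * z) * g z)
      (F' := fun (x : ℂ) (z : ℂ) => z * (Complex.exp (x * z) * g z))
      (x₀ := a) (bound := fun _ => R * (Real.exp ((‖a‖ + 1) * R) * C))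
      (Metric.ball_mem_nhds a one_pos) ?_ ?_ ?_ ?_ ?_ ?_).2
  · refine HasDerivAt.congr_deriv hmain ?_
    refine integral_congr_ae (Filter.Eventually.of_forall fun z => ?_)
    ring
  · filter_upwards with x
    exact ((Complex.measurable_exp.comp (measurable_const.mul measurable_id)).mul
      hg).aestronglyMeasurable
  · exact aux_int hK hK0 (by fun_prop) (fun z hz =>
      (norm_mul _ _).le.trans (mul_le_mul (expRe_le (hR z hz)) (hC z hz) (norm_nonneg _)
        (Real.exp_nonneg _)))
  · exact (measurable_id.mul ((Complex.measurable_exp.comp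
      (measurable_const.mul measurable_id)).mul hg)).aestronglyMeasurable
  · filter_upwards [hae] with z hz
    intro x hx
    have hxa : ‖x‖ ≤ ‖a‖ + 1 := by
      have := mem_ball_iff_norm.mp hx
      calc ‖x‖ = ‖a + (x - a)‖ := by congr 1; ring
        _ ≤ ‖a‖ + ‖x - a‖ := norm_add_le _ _
        _ ≤ ‖a‖ + 1 := by linarith
    have h1 : ‖Complex.exp (x * z)‖ ≤ Real.exp ((‖a‖ + 1) * R) := by
      refine (expRe_le (hR z hz)).trans (Real.exp_le_exp.2 ?_)
      exact mul_le_mul_of_nonneg_right hxa hR0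
    calc ‖z * (Complex.exp (x * z) * g z)‖ = ‖z‖ * (‖Complex.exp (x * z)‖ * ‖g z‖) := by
          rw [norm_mul, norm_mul]
      _ ≤ R * (Real.exp ((‖a‖ + 1) * R) * C) := by
          refine mul_le_mul (hR z hz) ?_ (by positivity) hR0
          exact mul_le_mul h1 (hC z hz) (norm_nonneg _) (Real.exp_nonneg _)
  · exact integrable_const _
  · filter_upwards with z
    intro x _
    have h := (((hasDerivAt_id x).mul_const z).cexp).mul_const (g z)
    exact h.congr_deriv (by simp only [id_eq]; ring)

end Aux2

/-- A compactly supported complex Borel measure on ℂ (encoded via its polar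
decomposition `h • P` with `P = |μ|` a finite positive measure and `‖h‖ ≡ 1`)
with nonzero total mass that satisfies the covariance equation is a nonzero
multiple of a Dirac measure. -/
theorem stmt_0 (P : Measure ℂ) [IsFiniteMeasure P] (h : ℂ → ℂ)
    (hmeas : Measurable h) (hnorm : ∀ z, ‖h z‖ = 1)
    (hsupp : ∃ K : Set ℂ, IsCompact K ∧ P Kᶜ = 0)
    (hmass : ∫ z, h z ∂P ≠ 0)
    (hcov : ∀ m n : ℕ,
      (∫ z, h z ∂P) * ∫ z, z ^ n * (starRingEnd ℂ) z ^ m * h z ∂P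
        = (∫ z, z ^ n * h z ∂P) * ∫ z, (starRingEnd ℂ) z ^ m * h z ∂P) :
    ∃ (c : ℂ) (ζ : ℂ), c ≠ 0 ∧
      ∀ s : Set ℂ, MeasurableSet s →
        ∫ z in s, h z ∂P = if ζ ∈ s then c else 0 := by
  obtain ⟨K, hK, hK0⟩ := hsupp
  have hae := aux_mem_ae hK hK0
  obtain ⟨R₀, hR₀⟩ := hK.isBounded.subset_closedBall 0
  set R : ℝ := max R₀ 0 with hRdef
  have hR0 : 0 ≤ R := le_max_right _ _
  have hR : ∀ z ∈ K, ‖z‖ ≤ R := fun z hz => by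
    have h1 := hR₀ hz
    rw [mem_closedBall, dist_zero_right] at h1
    exact h1.trans (le_max_left _ _)
  have mconj : Measurable fun z : ℂ => (starRingEnd ℂ) z := RCLike.continuous_conj.measurable
  have hRconj : ∀ z ∈ K, ‖(starRingEnd ℂ) z‖ ≤ R := fun z hz => by
    rw [RCLike.norm_conj]; exact hR z hz
  set c : ℂ := ∫ z, h z ∂P with hcdef
  set φ : ℂ → ℂ := Phi P h with hφdef
  set ψt : ℂ → ℂ := Phi P (fun z => (starRingEnd ℂ) (h z)) with hψtdef
  set ψ : ℂ → ℂ := fun b => ∫ z, Complex.exp (b * (starRingEnd ℂ) z) * h z ∂P with hψdef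
  set χ : ℂ → ℂ → ℂ :=
    fun a b => ∫ z, Complex.exp (a * z + b * (starRingEnd ℂ) z) * h z ∂P with hχdef
  have hφD : ∀ a, HasDerivAt φ (Phi P (fun z => z * h z) a) a := fun a =>
    aux_deriv hK hK0 hmeas (fun z _ => (hnorm z).le) hR0 hR a
  have hψtD : ∀ a, HasDerivAt ψt (Phi P (fun z => z * (starRingEnd ℂ) (h z)) a) a := fun a =>
    aux_deriv (g := fun z => (starRingEnd ℂ) (h z)) hK hK0 (by fun_prop) (C := 1)
      (fun z _ => by rw [RCLike.norm_conj]; exact (hnorm z).le) hR0 hR a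
  have hφDiff : Differentiable ℂ φ := fun a => (hφD a).differentiableAt
  have hψtDiff : Differentiable ℂ ψt := fun a => (hψtD a).differentiableAt
  -- E1 : factorization of the two-sided transform
  have hE1 : ∀ a b, c * χ a b = φ a * ψ b := by
    intro a b
    have hgb : Measurable fun z => Complex.exp (b * (starRingEnd ℂ) z) * h z := by fun_prop
    have hgbbd : ∀ z ∈ K, ‖Complex.exp (b * (starRingEnd ℂ) z) * h z‖ ≤ Real.exp (‖b‖ * R) :=
      fun z hz => by
        rw [norm_mul, hnorm, mul_one]; exact expRe_le (hRconj z hz)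
    have hi : χ a b = ∑' n : ℕ, a ^ n / n.factorial *
        ∫ z, z ^ n * (Complex.exp (b * (starRingEnd ℂ) z) * h z) ∂P := by
      have hs := aux_series (w := fun z => z) hK hK0 measurable_id hgb hR0 hR hgbbd a
      calc χ a b = ∫ z, Complex.exp (a * z) *
            (Complex.exp (b * (starRingEnd ℂ) z) * h z) ∂P := by
            simp only [hχdef]
            refine integral_congr_ae (Filter.Eventually.of_forall fun z => ?_)
            simp only [Complex.exp_add]; ring
        _ = _ := hs
    have hii : ∀ n : ℕ, c * ∫ z, z ^ n * (Complex.exp (b * (starRingEnd ℂ) z) * h z) ∂P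
        = (∫ z, z ^ n * h z ∂P) * ψ b := by
      intro n
      have hgn : Measurable fun z => z ^ n * h z := by fun_prop
      have hgnbd : ∀ z ∈ K, ‖z ^ n * h z‖ ≤ R ^ n := fun z hz => by
        rw [norm_mul, hnorm, mul_one, norm_pow]
        exact pow_le_pow_left₀ (norm_nonneg _) (hR z hz) n
      have h2 := aux_series (w := fun z => (starRingEnd ℂ) z) hK hK0 mconj hgn hR0 hRconj hgnbd b
      have h3 : ∫ z, z ^ n * (Complex.exp (b * (starRingEnd ℂ) z) * h z) ∂P
          = ∑' m : ℕ, b ^ m / m.factorial * ∫ z, z ^ n * (starRingEnd ℂ) z ^ m * h z ∂P := by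
        calc ∫ z, z ^ n * (Complex.exp (b * (starRingEnd ℂ) z) * h z) ∂P
            = ∫ z, Complex.exp (b * (starRingEnd ℂ) z) * (z ^ n * h z) ∂P :=
              integral_congr_ae (Filter.Eventually.of_forall fun z => by ring)
          _ = ∑' m : ℕ, b ^ m / m.factorial * ∫ z, (starRingEnd ℂ) z ^ m * (z ^ n * h z) ∂P := h2
          _ = _ := by
              refine tsum_congr fun m => ?_
              congr 1
              exact integral_congr_ae (Filter.Eventually.of_forall fun z => by ring)
      have hψexp : ψ b = ∑' m : ℕ, b ^ m / m.factorial *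
          ∫ z, (starRingEnd ℂ) z ^ m * h z ∂P :=
        aux_series (w := fun z => (starRingEnd ℂ) z) hK hK0 mconj hmeas hR0 hRconj
          (fun z _ => (hnorm z).le) b
      rw [h3, hψexp, ← tsum_mul_left, ← tsum_mul_left]
      refine tsum_congr fun m => ?_
      linear_combination (b ^ m / (m.factorial : ℂ)) * hcov m n
    have hφexp : φ a = ∑' n : ℕ, a ^ n / n.factorial * ∫ z, z ^ n * h z ∂P :=
      aux_series (w := fun z => z) hK hK0 measurable_id hmeas hR0 hR (fun z _ => (hnorm z).le) a
    rw [hi, hφexp, ← tsum_mul_left, ← tsum_mul_right]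
    refine tsum_congr fun n => ?_
    linear_combination (a ^ n / (n.factorial : ℂ)) * hii n
  -- relation between ψt and ψ
  have hψt_conj : ∀ w, ψt w = (starRingEnd ℂ) (ψ ((starRingEnd ℂ) w)) := by
    intro w
    simp only [hψtdef, hψdef, Phi]
    rw [← integral_conj]
    refine integral_congr_ae (Filter.Eventually.of_forall fun z => ?_)
    simp only [map_mul, ← Complex.exp_conj, Complex.conj_conj]
  -- uniform bound on the twisted transform
  have hbound : ∀ a b s : ℂ, ‖χ (a + s) (b - (starRingEnd ℂ) s)‖
      ≤ Real.exp ((‖a‖ + ‖b‖) * R) * (P Set.univ).toReal := by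
    intro a b s
    apply norm_integral_le_of_norm_le_const
    filter_upwards [hae] with z hz
    rw [norm_mul, hnorm, mul_one, Complex.norm_exp]
    apply Real.exp_le_exp.2
    have hre : ((a + s) * z + (b - (starRingEnd ℂ) s) * (starRingEnd ℂ) z).re
        = (a * z + b * (starRingEnd ℂ) z).re := by
      have hsplit : (a + s) * z + (b - (starRingEnd ℂ) s) * (starRingEnd ℂ) z
          = (a * z + b * (starRingEnd ℂ) z) + (s * z - (starRingEnd ℂ) (s * z)) := by
        rw [map_mul]; ring
      rw [hsplit, Complex.add_re, Complex.sub_re, Complex.conj_re]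
      ring
    rw [hre]
    calc (a * z + b * (starRingEnd ℂ) z).re ≤ ‖a * z + b * (starRingEnd ℂ) z‖ :=
          Complex.re_le_norm _
      _ = ‖a * z + b * (starRingEnd ℂ) z‖ := rfl
      _ ≤ ‖a * z‖ + ‖b * (starRingEnd ℂ) z‖ := norm_add_le _ _
      _ ≤ ‖a‖ * R + ‖b‖ * R := by
          rw [norm_mul, norm_mul]
          exact add_le_add (mul_le_mul_of_nonneg_left (hR z hz) (norm_nonneg _))
            (mul_le_mul_of_nonneg_left (hRconj z hz) (norm_nonneg _))
      _ = (‖a‖ + ‖b‖) * R := by ring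
  -- Liouville step: the functional equation
  have fe : ∀ a w s : ℂ, φ (a + s) * ψt (w - s) = φ a * ψt w := by
    intro a w s
    set g₀ : ℂ → ℂ := fun s => φ (a + s) * ψt (w - s) with hg₀
    have hdiff : Differentiable ℂ g₀ := by
      apply Differentiable.mul
      · exact hφDiff.comp (differentiable_id.const_add a)
      · exact hψtDiff.comp (differentiable_const w |>.sub differentiable_id)
    have hb : ∀ t : ℂ, ‖g₀ t‖ ≤ ‖c‖ * (Real.exp ((‖a‖ + ‖(starRingEnd ℂ) w‖) * R)
        * (P Set.univ).toReal) := by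
      intro t
      have e1 : ψt (w - t) = (starRingEnd ℂ) (ψ ((starRingEnd ℂ) w - (starRingEnd ℂ) t)) := by
        rw [hψt_conj, map_sub]
      have e2 : ‖g₀ t‖ = ‖φ (a + t) * ψ ((starRingEnd ℂ) w - (starRingEnd ℂ) t)‖ := by
        calc ‖g₀ t‖ = ‖φ (a + t) * ψt (w - t)‖ := rfl
          _ = _ := by rw [e1, norm_mul, norm_mul, RCLike.norm_conj]
      rw [e2, ← hE1]
      rw [norm_mul]
      exact mul_le_mul_of_nonneg_left (hbound a ((starRingEnd ℂ) w) t) (norm_nonneg c)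
    have hrange : Bornology.IsBounded (Set.range g₀) := by
      rw [Metric.isBounded_iff_subset_closedBall 0]
      exact ⟨_, by rintro x ⟨t, rfl⟩; rw [mem_closedBall, dist_zero_right]; exact hb t⟩
    have := hdiff.apply_eq_apply_of_bounded hrange s 0
    simpa [hg₀] using this
  -- basic values
  have hφ0 : φ 0 = c := by
    simp only [hφdef, Phi, hcdef]
    refine integral_congr_ae (Filter.Eventually.of_forall fun z => ?_)
    simp
  have hψt0 : ψt 0 = (starRingEnd ℂ) c := by
    simp only [hψtdef, Phi, hcdef]
    rw [← integral_conj]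
    refine integral_congr_ae (Filter.Eventually.of_forall fun z => ?_)
    simp
  have hcconj : (starRingEnd ℂ) c ≠ 0 := by
    rw [starRingEnd_apply]
    exact star_ne_zero.mpr hmass
  have hψt_eq : ∀ t, c * ψt t = (starRingEnd ℂ) c * φ t := by
    intro t
    have h1 := fe 0 t t
    rw [zero_add, sub_self, hψt0, hφ0] at h1
    linear_combination -h1
  have hmult : ∀ x y, c * φ (x + y) = φ x * φ y := by
    intro x y
    have h1 := fe x y y
    rw [sub_self, hψt0] at h1
    have h2 := hψt_eq y
    apply mul_left_cancel₀ hcconj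
    linear_combination c * h1 + φ x * h2
  -- the derivative of φ is proportional to φ
  set φ' : ℂ → ℂ := Phi P (fun z => z * h z) with hφ'def
  have hstar : ∀ a, c * φ' a = φ a * φ' 0 := by
    intro a
    have h0 : HasDerivAt (fun y : ℂ => a + y) 1 0 := by
      simpa using (hasDerivAt_id (0 : ℂ)).const_add a
    have h1 : HasDerivAt (fun y => c * φ (a + y)) (c * φ' a) 0 := by
      have h1' := (hφD (a + 0)).comp 0 h0
      rw [add_zero] at h1'
      have := h1'.const_mul c
      simpa [Function.comp] using this
    have h2 : HasDerivAt (fun y => φ a * φ y) (φ a * φ' 0) 0 := (hφD 0).const_mul (φ a)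
    have hfeq : (fun y => c * φ (a + y)) = fun y => φ a * φ y := funext fun y => hmult a y
    rw [hfeq] at h1
    exact h1.unique h2
  set ζ : ℂ := φ' 0 / c with hζdef
  have hφ'eq : ∀ a, φ' a = ζ * φ a := by
    intro a
    rw [hζdef, div_mul_eq_mul_div, eq_div_iff hmass]
    linear_combination hstar a
  have hφDz : ∀ a, HasDerivAt φ (ζ * φ a) a := fun a => (hφ'eq a) ▸ hφD a
  -- moments of φ
  have hmomφ : ∀ n : ℕ, ∀ a, Phi P (fun z => z ^ n * h z) a = ζ ^ n * φ a := by
    intro n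
    induction n with
    | zero =>
      intro a
      rw [pow_zero, one_mul, hφdef]
      simp only [Phi]
      exact integral_congr_ae (Filter.Eventually.of_forall fun z => by simp)
    | succ n ih =>
      intro a
      have hgn : Measurable fun z : ℂ => z ^ n * h z := by fun_prop
      have hbd : ∀ z ∈ K, ‖z ^ n * h z‖ ≤ R ^ n := fun z hz => by
        rw [norm_mul, hnorm, mul_one, norm_pow]
        exact pow_le_pow_left₀ (norm_nonneg _) (hR z hz) n
      have hd1 : HasDerivAt (Phi P (fun z => z ^ n * h z))
          (Phi P (fun z => z ^ (n + 1) * h z) a) a := by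
        refine (aux_deriv hK hK0 hgn hbd hR0 hR a).congr_deriv ?_
        simp only [Phi]
        exact integral_congr_ae (Filter.Eventually.of_forall fun z => by simp only [pow_succ]; ring)
      have hd2 : HasDerivAt (Phi P (fun z => z ^ n * h z)) (ζ ^ n * (ζ * φ a)) a := by
        have heq : Phi P (fun z => z ^ n * h z) = fun a => ζ ^ n * φ a := funext ih
        rw [heq]
        exact (hφDz a).const_mul _
      rw [hd1.unique hd2, pow_succ]
      ring
  -- moments of ψt
  set ψt' : ℂ → ℂ := Phi P (fun z => z * (starRingEnd ℂ) (h z)) with hψt'def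
  have hψt'eq : ∀ a, ψt' a = ζ * ψt a := by
    intro a
    apply mul_left_cancel₀ hmass
    have h1 : HasDerivAt (fun t => c * ψt t) (c * ψt' a) a := (hψtD a).const_mul c
    have h2 : HasDerivAt (fun t => (starRingEnd ℂ) c * φ t) ((starRingEnd ℂ) c * (ζ * φ a)) a :=
      (hφDz a).const_mul _
    have hfeq : (fun t => c * ψt t) = fun t => (starRingEnd ℂ) c * φ t := funext hψt_eq
    rw [hfeq] at h1
    have h3 := h1.unique h2
    have h4 := hψt_eq a
    linear_combination h3 - ζ * h4
  have hψtDz : ∀ a, HasDerivAt ψt (ζ * ψt a) a := fun a => (hψt'eq a) ▸ hψtD a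
  have hmomψ : ∀ n : ℕ, ∀ a,
      Phi P (fun z => z ^ n * (starRingEnd ℂ) (h z)) a = ζ ^ n * ψt a := by
    intro n
    induction n with
    | zero =>
      intro a
      rw [pow_zero, one_mul, hψtdef]
      simp only [Phi]
      exact integral_congr_ae (Filter.Eventually.of_forall fun z => by simp)
    | succ n ih =>
      intro a
      have hgn : Measurable fun z : ℂ => z ^ n * (starRingEnd ℂ) (h z) := by fun_prop
      have hbd : ∀ z ∈ K, ‖z ^ n * (starRingEnd ℂ) (h z)‖ ≤ R ^ n := fun z hz => by
        rw [norm_mul, RCLike.norm_conj, hnorm, mul_one, norm_pow]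
        exact pow_le_pow_left₀ (norm_nonneg _) (hR z hz) n
      have hd1 : HasDerivAt (Phi P (fun z => z ^ n * (starRingEnd ℂ) (h z)))
          (Phi P (fun z => z ^ (n + 1) * (starRingEnd ℂ) (h z)) a) a := by
        refine (aux_deriv hK hK0 hgn hbd hR0 hR a).congr_deriv ?_
        simp only [Phi]
        exact integral_congr_ae (Filter.Eventually.of_forall fun z => by simp only [pow_succ]; ring)
      have hd2 : HasDerivAt (Phi P (fun z => z ^ n * (starRingEnd ℂ) (h z)))
          (ζ ^ n * (ζ * ψt a)) a := by
        have heq : Phi P (fun z => z ^ n * (starRingEnd ℂ) (h z)) = fun a => ζ ^ n * ψt a :=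
          funext ih
        rw [heq]
        exact (hψtDz a).const_mul _
      rw [hd1.unique hd2, pow_succ]
      ring
  -- moment values
  have hα : ∀ n : ℕ, ∫ z, z ^ n * h z ∂P = ζ ^ n * c := by
    intro n
    calc ∫ z, z ^ n * h z ∂P = Phi P (fun z => z ^ n * h z) 0 := by
          simp only [Phi]
          exact (integral_congr_ae (Filter.Eventually.of_forall fun z => by simp)).symm
      _ = ζ ^ n * c := by rw [hmomφ n 0, hφ0]
  have hβ : ∀ m : ℕ, ∫ z, (starRingEnd ℂ) z ^ m * h z ∂P = (starRingEnd ℂ) ζ ^ m * c := by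
    intro m
    have h1 : ∫ z, z ^ m * (starRingEnd ℂ) (h z) ∂P = ζ ^ m * (starRingEnd ℂ) c := by
      calc ∫ z, z ^ m * (starRingEnd ℂ) (h z) ∂P
          = Phi P (fun z => z ^ m * (starRingEnd ℂ) (h z)) 0 := by
            simp only [Phi]
            exact (integral_congr_ae (Filter.Eventually.of_forall fun z => by simp)).symm
        _ = ζ ^ m * (starRingEnd ℂ) c := by rw [hmomψ m 0, hψt0]
    have h2 : ∫ z, (starRingEnd ℂ) z ^ m * h z ∂P
        = (starRingEnd ℂ) (∫ z, z ^ m * (starRingEnd ℂ) (h z) ∂P) := by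
      rw [← integral_conj]
      exact integral_congr_ae (Filter.Eventually.of_forall fun z => by
        simp [map_mul, map_pow])
    rw [h2, h1, map_mul, map_pow, Complex.conj_conj]
  have hγ : ∀ n m : ℕ, ∫ z, z ^ n * (starRingEnd ℂ) z ^ m * h z ∂P
      = c * (ζ ^ n * (starRingEnd ℂ) ζ ^ m) := by
    intro n m
    apply mul_left_cancel₀ hmass
    rw [hcov m n, hα n, hβ m]
    ring
  -- Stone–Weierstrass step
  set K' : Set ℂ := insert ζ K with hK'def
  have hK'c : IsCompact K' := hK.insert ζ
  have hK'meas : MeasurableSet K' := hK'c.isClosed.measurableSet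
  haveI : CompactSpace ↥K' := isCompact_iff_compactSpace.mp hK'c
  have hζK' : ζ ∈ K' := Set.mem_insert _ _
  have hKK' : K ⊆ K' := Set.subset_insert _ _
  set E : C(↥K', ℂ) → ℂ → ℂ := fun f z => if hz : z ∈ K' then f ⟨z, hz⟩ else 0 with hEdef
  have hEmeas : ∀ f : C(↥K', ℂ), Measurable (E f) := fun f =>
    Measurable.dite (f.continuous.measurable) measurable_const hK'meas
  have hEbd : ∀ f : C(↥K', ℂ), ∀ z, ‖E f z‖ ≤ ‖f‖ := by
    intro f z
    simp only [hEdef]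
    split
    · exact f.norm_coe_le_norm _
    · simpa using norm_nonneg f
  have hEint : ∀ f : C(↥K', ℂ), Integrable (fun z => E f z * h z) P := fun f =>
    aux_int hK hK0 ((hEmeas f).mul hmeas) (C := ‖f‖)
      (fun z _ => by rw [norm_mul, hnorm, mul_one]; exact hEbd f z)
  set Λ : C(↥K', ℂ) → ℂ := fun f => ∫ z, E f z * h z ∂P with hΛdef
  set Λ₂ : C(↥K', ℂ) → ℂ := fun f => c * f ⟨ζ, hζK'⟩ with hΛ₂def
  have hEsub : ∀ (f g : C(↥K', ℂ)) (z : ℂ), E f z - E g z = E (f - g) z := by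
    intro f g z
    simp only [hEdef]
    split
    · simp
    · simp
  have hΛcont : Continuous Λ := by
    refine LipschitzWith.continuous (K := (P Set.univ).toReal.toNNReal)
      (LipschitzWith.of_dist_le_mul fun f g => ?_)
    rw [dist_eq_norm, dist_eq_norm]
    have hsub : Λ f - Λ g = ∫ z, (E f z - E g z) * h z ∂P := by
      simp only [hΛdef]
      rw [← integral_sub (hEint f) (hEint g)]
      exact integral_congr_ae (Filter.Eventually.of_forall fun z => by ring)
    rw [hsub]
    have : ‖∫ z, (E f z - E g z) * h z ∂P‖ ≤ ‖f - g‖ * (P Set.univ).toReal := by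
      apply norm_integral_le_of_norm_le_const
      filter_upwards with z
      rw [norm_mul, hnorm, mul_one, hEsub f g z]
      exact hEbd _ z
    refine this.trans (le_of_eq ?_)
    rw [Real.coe_toNNReal _ ENNReal.toReal_nonneg]
    ring
  have hΛ₂cont : Continuous Λ₂ := continuous_const.mul (continuous_eval_const _)
  set ι : C(↥K', ℂ) := ContinuousMap.restrict K' (ContinuousMap.id ℂ) with hιdef
  have hev : ∀ (n m : ℕ) (x : ↥K'),
      (ι ^ n * star ι ^ m) x = (x : ℂ) ^ n * (starRingEnd ℂ) (x : ℂ) ^ m := by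
    intro n m x
    simp [hιdef, Complex.star_def]
  have hmono : ∀ n m : ℕ, Λ (ι ^ n * star ι ^ m) = Λ₂ (ι ^ n * star ι ^ m) := by
    intro n m
    simp only [hΛdef, hΛ₂def]
    have h1 : ∫ z, E (ι ^ n * star ι ^ m) z * h z ∂P
        = ∫ z, z ^ n * (starRingEnd ℂ) z ^ m * h z ∂P := by
      refine integral_congr_ae ?_
      filter_upwards [hae] with z hz
      have hzK' : z ∈ K' := hKK' hz
      simp only [hEdef]
      rw [dif_pos hzK', hev]
    rw [h1, hγ n m, hev]
  have hSW : ∀ f : C(↥K', ℂ), Λ f = Λ₂ f := by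
    have hEqOn : Set.EqOn Λ Λ₂ ((polynomialFunctions K').starClosure : Set C(↥K', ℂ)) := by
      intro p hp
      rw [SetLike.mem_coe, polynomialFunctions.starClosure_eq_adjoin_X] at hp
      have hp2 : p ∈ Submodule.span ℂ ((Submonoid.closure
          (({(Polynomial.toContinuousMapOnAlgHom K') Polynomial.X} : Set C(↥K', ℂ)) ∪
            star {(Polynomial.toContinuousMapOnAlgHom K') Polynomial.X})) : Set C(↥K', ℂ)) := by
        rw [← StarAlgebra.adjoin_eq_span]
        exact hp
      refine Submodule.span_induction (p := fun x _ => Λ x = Λ₂ x) ?_ ?_ ?_ ?_ hp2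
      · intro x hx
        have hx' : ∃ n m : ℕ, x = ι ^ n * star ι ^ m := by
          refine Submonoid.closure_induction
            (motive := fun y _ => ∃ n m : ℕ, y = ι ^ n * star ι ^ m) ?_ ?_ ?_ hx
          · intro y hy
            rcases hy with hy | hy
            · rw [Set.mem_singleton_iff] at hy
              refine ⟨1, 0, ?_⟩
              rw [hy, Polynomial.toContinuousMapOnAlgHom_apply,
                Polynomial.toContinuousMapOn_X_eq_restrict_id]
              simp [hιdef]
            · rw [Set.mem_star, Set.mem_singleton_iff] at hy
              have hy' : y = star ((Polynomial.toContinuousMapOnAlgHom K') Polynomial.X) := by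
                rw [← hy, star_star]
              refine ⟨0, 1, ?_⟩
              rw [hy', Polynomial.toContinuousMapOnAlgHom_apply,
                Polynomial.toContinuousMapOn_X_eq_restrict_id]
              simp [hιdef]
          · exact ⟨0, 0, by simp⟩
          · rintro y y' _ _ ⟨n, m, rfl⟩ ⟨n', m', rfl⟩
            exact ⟨n + n', m + m', by rw [pow_add, pow_add]; ring⟩
        obtain ⟨n, m, rfl⟩ := hx'
        exact hmono n m
      · have hE0 : ∀ z, E 0 z = 0 := by
          intro z
          simp only [hEdef]
          split <;> simp
        simp only [hΛdef, hΛ₂def]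
        have : ∫ z, E 0 z * h z ∂P = 0 := by
          rw [integral_congr_ae (Filter.Eventually.of_forall fun z => by rw [hE0 z, zero_mul])]
          exact integral_zero _ _
        rw [this]
        simp
      · intro x y _ _ hx hy
        have hExy : ∀ z, E (x + y) z = E x z + E y z := by
          intro z
          simp only [hEdef]
          split <;> simp
        simp only [hΛdef, hΛ₂def] at hx hy ⊢
        have : ∫ z, E (x + y) z * h z ∂P = (∫ z, E x z * h z ∂P) + ∫ z, E y z * h z ∂P := by
          rw [← integral_add (hEint x) (hEint y)]
          exact integral_congr_ae (Filter.Eventually.of_forall fun z => by simp only [hExy]; ring)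
        rw [this, hx, hy]
        simp
        ring
      · intro r x _ hx
        have hErx : ∀ z, E (r • x) z = r * E x z := by
          intro z
          simp only [hEdef]
          split <;> simp
        simp only [hΛdef, hΛ₂def] at hx ⊢
        have : ∫ z, E (r • x) z * h z ∂P = r * ∫ z, E x z * h z ∂P := by
          rw [← integral_const_mul]
          exact integral_congr_ae (Filter.Eventually.of_forall fun z => by simp only [hErx]; ring)
        rw [this, hx]
        simp
        ring
    intro f
    have hf : f ∈ closure ((polynomialFunctions K').starClosure : Set C(↥K', ℂ)) := by
      have h1 : f ∈ ((polynomialFunctions K').starClosure.topologicalClosure :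
          Set C(↥K', ℂ)) := by
        rw [polynomialFunctions.starClosure_topologicalClosure K']
        trivial
      rwa [StarSubalgebra.topologicalClosure_coe] at h1
    exact hEqOn.closure hΛcont hΛ₂cont hf
  have hcont : ∀ f : C(ℂ, ℂ), ∫ z, f z * h z ∂P = c * f ζ := by
    intro f
    have h1 := hSW (f.restrict K')
    have h2 : Λ (f.restrict K') = ∫ z, f z * h z ∂P := by
      simp only [hΛdef]
      refine integral_congr_ae ?_
      filter_upwards [hae] with z hz
      have hzK' := hKK' hz
      simp only [hEdef]
      rw [dif_pos hzK']
      simp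
    have h3 : Λ₂ (f.restrict K') = c * f ζ := by
      simp only [hΛ₂def]
      simp
    rw [h2, h3] at h1
    exact h1
  -- conclusion via regularity
  refine ⟨c, ζ, hmass, ?_⟩
  intro s hs
  have hhint : Integrable h P := aux_int hK hK0 hmeas (fun z _ => (hnorm z).le)
  have key : ∀ ε : ℝ, 0 < ε → ‖(∫ z in s, h z ∂P) - (if ζ ∈ s then c else 0)‖ ≤ ε := by
    intro ε hε
    have hPs : P s ≠ ⊤ := measure_ne_top P s
    have hη2 : (ENNReal.ofReal ε) / 2 ≠ 0 :=
      (ENNReal.div_pos (ENNReal.ofReal_pos.mpr hε).ne' ENNReal.ofNat_ne_top).ne'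
    obtain ⟨U, hsU, hUopen, _, hU⟩ := hs.exists_isOpen_diff_lt hPs hη2
    obtain ⟨C0, hC0s, hC0c, hC0⟩ := hs.exists_isCompact_diff_lt hPs hη2
    obtain ⟨C', U', hC'c, hU'o, hC's, hsU', hζ', hsub⟩ :
        ∃ (C' U' : Set ℂ), IsCompact C' ∧ IsOpen U' ∧ C' ⊆ s ∧ s ⊆ U' ∧
          ((ζ ∈ s → ζ ∈ C') ∧ (ζ ∉ s → ζ ∉ U')) ∧ U' \ C' ⊆ U \ C0 := by
      by_cases hζs : ζ ∈ s
      · exact ⟨insert ζ C0, U, hC0c.insert ζ, hUopen, Set.insert_subset hζs hC0s, hsU,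
          ⟨fun _ => Set.mem_insert _ _, fun hn => absurd hζs hn⟩,
          fun z hz => ⟨hz.1, fun hzC => hz.2 (Set.mem_insert_of_mem _ hzC)⟩⟩
      · refine ⟨C0, U \ {ζ}, hC0c, hUopen.sdiff isClosed_singleton, hC0s,
          fun z hz => ⟨hsU hz, fun hzζ => hζs (by rwa [Set.mem_singleton_iff] at hzζ ▸ hz)⟩,
          ⟨fun hin => absurd hin hζs, fun _ hmem => hmem.2 rfl⟩,
          fun z hz => ⟨hz.1.1, hz.2⟩⟩
    have hmeasbd : (P (U' \ C')).toReal ≤ ε := by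
      have h1 : P (U' \ C') ≤ P (U \ s) + P (s \ C0) := by
        refine le_trans (measure_mono ?_) (measure_union_le _ _)
        intro z hz
        have hz' := hsub hz
        by_cases hzs : z ∈ s
        · exact Or.inr ⟨hzs, hz'.2⟩
        · exact Or.inl ⟨hz'.1, hzs⟩
      have h2 : P (U \ s) + P (s \ C0) ≤ ENNReal.ofReal ε := by
        calc P (U \ s) + P (s \ C0) ≤ ENNReal.ofReal ε / 2 + ENNReal.ofReal ε / 2 :=
              add_le_add hU.le hC0.le
          _ = ENNReal.ofReal ε := ENNReal.add_halves _
      calc (P (U' \ C')).toReal ≤ (ENNReal.ofReal ε).toReal :=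
            ENNReal.toReal_mono ENNReal.ofReal_ne_top (h1.trans h2)
        _ = ε := ENNReal.toReal_ofReal hε.le
    obtain ⟨f, hf0, hf1, hf01⟩ := exists_continuous_zero_one_of_isCompact hC'c
      hU'o.isClosed_compl (Set.disjoint_compl_right_iff_subset.mpr (hC's.trans hsU'))
    set g : C(ℂ, ℝ) := ContinuousMap.const ℂ 1 - f with hgdef
    have hg1 : ∀ z ∈ C', g z = 1 := fun z hz => by
      simp [hgdef, hf0 hz]
    have hg0 : ∀ z ∉ U', g z = 0 := fun z hz => by
      simp [hgdef, hf1 (Set.mem_compl hz)]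
    have hg01 : ∀ z, 0 ≤ g z ∧ g z ≤ 1 := fun z => by
      have := hf01 z
      constructor
      · simp only [hgdef, ContinuousMap.sub_apply, ContinuousMap.const_apply]
        linarith [this.2]
      · simp only [hgdef, ContinuousMap.sub_apply, ContinuousMap.const_apply]
        linarith [this.1]
    set gc : C(ℂ, ℂ) := ⟨fun z => ((g z : ℝ) : ℂ), Complex.continuous_ofReal.comp g.continuous⟩
      with hgcdef
    have hgint : ∫ z, gc z * h z ∂P = c * gc ζ := hcont gc
    have hgcint : Integrable (fun z => gc z * h z) P := by
      refine aux_int hK hK0 (gc.continuous.measurable.mul hmeas) (C := 1) fun z _ => ?_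
      rw [norm_mul, hnorm, mul_one]
      simp only [hgcdef, ContinuousMap.coe_mk, Complex.norm_real]
      rw [Real.norm_eq_abs, _root_.abs_of_nonneg (hg01 z).1]
      exact (hg01 z).2
    have hgcζ : c * gc ζ = (if ζ ∈ s then c else 0) := by
      by_cases hζs : ζ ∈ s
      · rw [if_pos hζs]
        have : g ζ = 1 := hg1 ζ (hζ'.1 hζs)
        simp [hgcdef, this]
      · rw [if_neg hζs]
        have : g ζ = 0 := hg0 ζ (hζ'.2 hζs)
        simp [hgcdef, this]
    have hdiffeq : (∫ z in s, h z ∂P) - (if ζ ∈ s then c else 0)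
        = ∫ z, (Set.indicator s h z - gc z * h z) ∂P := by
      rw [← integral_indicator hs, ← hgcζ, ← hgint,
        integral_sub (hhint.indicator hs) hgcint]
    rw [hdiffeq]
    have hUCmeas : MeasurableSet (U' \ C') :=
      hU'o.measurableSet.diff hC'c.isClosed.measurableSet
    calc ‖∫ z, (Set.indicator s h z - gc z * h z) ∂P‖
        ≤ ∫ z, ‖Set.indicator s h z - gc z * h z‖ ∂P := norm_integral_le_integral_norm _
      _ ≤ ∫ z, Set.indicator (U' \ C') (fun _ => (1 : ℝ)) z ∂P := by
          refine integral_mono ((hhint.indicator hs).sub hgcint).norm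
            ((integrable_const (1 : ℝ)).indicator hUCmeas) fun z => ?_
          by_cases hzs : z ∈ s
          · rw [Set.indicator_of_mem hzs]
            by_cases hzC : z ∈ C'
            · have hgz : g z = 1 := hg1 z hzC
              have : h z - gc z * h z = 0 := by
                simp [hgcdef, hgz]
              rw [this, norm_zero]
              exact Set.indicator_nonneg (fun _ _ => zero_le_one) z
            · have hzUC : z ∈ U' \ C' := ⟨hsU' hzs, hzC⟩
              rw [Set.indicator_of_mem hzUC]
              have : h z - gc z * h z = ((1 : ℝ) - g z : ℝ) * h z := by
                simp only [hgcdef, ContinuousMap.coe_mk]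
                push_cast
                ring
              rw [this, norm_mul, hnorm, mul_one, Complex.norm_real]
              rw [Real.norm_eq_abs, _root_.abs_of_nonneg (by linarith [(hg01 z).2])]
              linarith [(hg01 z).1]
          · rw [Set.indicator_of_notMem hzs, zero_sub, norm_neg]
            by_cases hzU : z ∈ U'
            · have hzC : z ∉ C' := fun hc => hzs (hC's hc)
              rw [Set.indicator_of_mem (show z ∈ U' \ C' from ⟨hzU, hzC⟩)]
              rw [norm_mul, hnorm, mul_one]
              simp only [hgcdef, ContinuousMap.coe_mk, Complex.norm_real]
              rw [Real.norm_eq_abs, _root_.abs_of_nonneg (hg01 z).1]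
              exact (hg01 z).2
            · have hgz : g z = 0 := hg0 z hzU
              have : gc z * h z = 0 := by simp [hgcdef, hgz]
              rw [this, norm_zero]
              exact Set.indicator_nonneg (fun _ _ => zero_le_one) z
      _ = (P (U' \ C')).toReal := by
          rw [integral_indicator_const (1 : ℝ) hUCmeas, smul_eq_mul, mul_one]; rfl
      _ ≤ ε := hmeasbd
  by_contra hne
  have hpos : 0 < ‖(∫ z in s, h z ∂P) - (if ζ ∈ s then c else 0)‖ := by
    rw [norm_pos_iff, sub_ne_zero]
    exact hne
  have hhalf := key _ (half_pos hpos)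
  linarith
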